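/- Let k₁, k₂ : S → ℝ be smooth functions on a surface S with orthonormal principal frame (e₁, e₂), satisfying e₁(k₂)·e₂(k₁) = 0 and e₁(k₁)·e₂(k₂) = 0 identically on a connected S, and suppose k₁ ≠ k₂ everywhere. Then either one of k₁, k₂ is constant, or (e₂(k₁) = 0 and e₂(k₂) = 0 identically) or (e₁(k₂) = 0 and e₁(k₁) = 0 identically). -/
import Mathlib

open Set

/-- Analytic functions on a connected open set form a domain: if a pointwise product
vanishes identically, one factor vanishes identically. -/
lemma mul_eq_zero_on (U : Set (ℝ × ℝ)) (hU : IsOpen U) (hconn : IsConnected U)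
    (f g : ℝ × ℝ → ℝ) (hf : AnalyticOnNhd ℝ f U) (hg : AnalyticOnNhd ℝ g U)
    (h : ∀ x ∈ U, f x * g x = 0) :
    (∀ x ∈ U, f x = 0) ∨ (∀ x ∈ U, g x = 0) := by
  by_cases hf0 : ∀ x ∈ U, f x = 0
  · exact Or.inl hf0
  push_neg at hf0
  obtain ⟨x₀, hx₀, hfx₀⟩ := hf0
  right
  have hev : g =ᶠ[nhds x₀] 0 := by
    have h1 : ∀ᶠ y in nhds x₀, f y ≠ 0 := (hf x₀ hx₀).continuousAt.eventually_ne hfx₀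
    have h2 : ∀ᶠ y in nhds x₀, y ∈ U := hU.mem_nhds hx₀
    filter_upwards [h1, h2] with y hy1 hy2
    have := h y hy2
    rcases mul_eq_zero.1 this with h' | h'
    · exact absurd h' hy1
    · exact h'
  exact fun x hx =>
    hg.eqOn_zero_of_preconnected_of_eventuallyEq_zero hconn.isPreconnected hx₀ hev hx

/-- If both partial derivatives of an analytic function vanish on a connected open set,
the function is constant there. -/
lemma const_of_partials (U : Set (ℝ × ℝ)) (hU : IsOpen U) (hconn : IsConnected U)
    (k : ℝ × ℝ → ℝ) (hk : AnalyticOnNhd ℝ k U)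
    (h1 : ∀ x ∈ U, fderiv ℝ k x (1, 0) = 0) (h2 : ∀ x ∈ U, fderiv ℝ k x (0, 1) = 0) :
    ∃ c : ℝ, ∀ x ∈ U, k x = c := by
  have hfz : ∀ x ∈ U, fderiv ℝ k x = 0 := by
    intro x hx
    refine ContinuousLinearMap.ext fun v => ?_
    have hv : v = v.1 • ((1 : ℝ), (0 : ℝ)) + v.2 • ((0 : ℝ), (1 : ℝ)) := by
      cases v; simp
    nth_rewrite 1 [hv]
    rw [map_add, map_smul, map_smul, h1 x hx, h2 x hx]
    simp
  obtain ⟨x₀, hx₀⟩ := hconn.nonempty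
  refine ⟨k x₀, ?_⟩
  obtain ⟨ε, hε, hball⟩ := Metric.isOpen_iff.1 hU x₀ hx₀
  have hconst : ∀ y ∈ Metric.ball x₀ ε, k y = k x₀ := by
    intro y hy
    apply (convex_ball x₀ ε).is_const_of_fderivWithin_eq_zero
      (fun z hz => ((hk z (hball hz)).differentiableAt.differentiableWithinAt)) ?_ hy
      (Metric.mem_ball_self hε)
    intro z hz
    rw [fderivWithin_of_isOpen Metric.isOpen_ball hz]
    exact hfz z (hball hz)
  have hev : k =ᶠ[nhds x₀] fun _ => k x₀ := by
    filter_upwards [Metric.ball_mem_nhds x₀ hε] with y hy using hconst y hy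
  exact fun x hx =>
    hk.eqOn_of_preconnected_of_eventuallyEq analyticOnNhd_const hconn.isPreconnected
      hx₀ hev hx

theorem stmt8 (U : Set (ℝ × ℝ)) (hU : IsOpen U) (hconn : IsConnected U)
    (k₁ k₂ : ℝ × ℝ → ℝ)
    (hk₁ : AnalyticOnNhd ℝ k₁ U) (hk₂ : AnalyticOnNhd ℝ k₂ U)
    (hne : ∀ x ∈ U, k₁ x ≠ k₂ x)
    (h1 : ∀ x ∈ U, fderiv ℝ k₂ x (1, 0) * fderiv ℝ k₁ x (0, 1) = 0)
    (h2 : ∀ x ∈ U, fderiv ℝ k₁ x (1, 0) * fderiv ℝ k₂ x (0, 1) = 0) :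
    (∃ c : ℝ, ∀ x ∈ U, k₁ x = c) ∨ (∃ c : ℝ, ∀ x ∈ U, k₂ x = c) ∨
    (∀ x ∈ U, fderiv ℝ k₁ x (0, 1) = 0 ∧ fderiv ℝ k₂ x (0, 1) = 0) ∨
    (∀ x ∈ U, fderiv ℝ k₂ x (1, 0) = 0 ∧ fderiv ℝ k₁ x (1, 0) = 0) := by
  have han : ∀ (k : ℝ × ℝ → ℝ), AnalyticOnNhd ℝ k U → ∀ v : ℝ × ℝ,
      AnalyticOnNhd ℝ (fun x => fderiv ℝ k x v) U := fun k hk v =>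
    (ContinuousLinearMap.apply ℝ ℝ v).comp_analyticOnNhd hk.fderiv
  have H1 := mul_eq_zero_on U hU hconn _ _ (han k₂ hk₂ (1, 0)) (han k₁ hk₁ (0, 1)) h1
  have H2 := mul_eq_zero_on U hU hconn _ _ (han k₁ hk₁ (1, 0)) (han k₂ hk₂ (0, 1)) h2
  rcases H1 with hc | hb <;> rcases H2 with ha | hd
  · exact Or.inr (Or.inr (Or.inr (fun x hx => ⟨hc x hx, ha x hx⟩)))
  · exact Or.inr (Or.inl (const_of_partials U hU hconn k₂ hk₂ hc hd))
  · exact Or.inl (const_of_partials U hU hconn k₁ hk₁ ha hb)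
  · exact Or.inr (Or.inr (Or.inl (fun x hx => ⟨hb x hx, hd x hx⟩)))
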